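/- Mycielski's theorem: Let X be a separable complete metric space without isolated points, and for each n ∈ ℕ let R_n be a residual subset of X^n. Then there exists a Mycielski set K ⊂ X (a set whose intersection with every nonempty open set contains a Cantor set) such that (x_1,...,x_n) ∈ R_n for every n and every n pairwise distinct points x_1,...,x_n ∈ K. -/

import Mathlib

open Filter Topology Set Metric

namespace Myc

variable {X : Type*} [MetricSpace X]

/-- The index of a node at level `k` of the construction: a pair `(m, s)` where `m` is
the stage at which the root of the tree containing this node was created and `s` is the
binary address within that tree. -/
def Idx (k : ℕ) (p : ℕ × List Bool) : Prop := p.1 + p.2.length + 1 = k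

/-- Geometric invariant of level `k`: nodes are nonempty open sets of small diameter
with pairwise disjoint closures. -/
def Pgeom (k : ℕ) (f : ℕ × List Bool → Set X) : Prop :=
  (∀ p, Idx k p → (f p).Nonempty ∧ IsOpen (f p) ∧
      ∀ x ∈ closure (f p), ∀ y ∈ closure (f p), dist x y ≤ (1/2 : ℝ)^k) ∧
  ∀ p q, Idx k p → Idx k q → p ≠ q → Disjoint (closure (f p)) (closure (f q))

/-- Density invariant of level `k`: products over injective tuples of level-`k` nodes
are contained in the scheduled dense open sets. -/
def Qd (D : (n : ℕ) → ℕ → Set (Fin n → X)) (k : ℕ) (f : ℕ × List Bool → Set X) : Prop :=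
  ∀ n j, Nat.pair n j < k → ∀ t : Fin n → ℕ × List Bool, (∀ i, Idx k (t i)) →
    Function.Injective t → ∀ x : Fin n → X, (∀ i, x i ∈ f (t i)) → x ∈ D n j

/-- Relation between consecutive levels: closures of children lie inside parents,
and the closure of the new root lies in `U`. -/
def Link (f g : ℕ × List Bool → Set X) (U : Set X) (k : ℕ) : Prop :=
  (∀ m s b, Idx k (m, s) → closure (g (m, s ++ [b])) ⊆ f (m, s)) ∧
  closure (g (k, [])) ⊆ U

lemma idx_finite (k : ℕ) : {p : ℕ × List Bool | Idx k p}.Finite := by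
  have h : {p : ℕ × List Bool | Idx k p} ⊆
      (Set.Iio k) ×ˢ {s : List Bool | s.length ≤ k} := by
    rintro ⟨m, s⟩ h
    have h' : m + s.length + 1 = k := h
    exact ⟨Set.mem_Iio.mpr (by omega), by simp only [Set.mem_setOf_eq]; omega⟩
  exact ((Set.finite_Iio k).prod (List.finite_length_le Bool k)).subset h

lemma exists_ne_mem (hX : ∀ x : X, Filter.NeBot (nhdsWithin x {x}ᶜ))
    {W : Set X} (hW : IsOpen W) {z : X} (hz : z ∈ W) (a : X) :
    ∃ y ∈ W, y ≠ a := by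
  rcases eq_or_ne z a with rfl | h
  · have : W ∩ {z}ᶜ ∈ nhdsWithin z {z}ᶜ :=
      Filter.inter_mem (nhdsWithin_le_nhds (hW.mem_nhds hz)) self_mem_nhdsWithin
    obtain ⟨y, hyW, hy⟩ := (hX z).nonempty_of_mem this
    exact ⟨y, hyW, hy⟩
  · exact ⟨z, hz, h⟩

lemma small_ball {W : Set X} (hW : IsOpen W) {z : X} (hz : z ∈ W) {ε : ℝ} (hε : 0 < ε) :
    ∃ r > 0, closedBall z r ⊆ W ∧ 2*r ≤ ε := by
  obtain ⟨r', hr', hball⟩ := Metric.isOpen_iff.mp hW z hz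
  refine ⟨min (r'/2) (ε/2), by positivity, ?_, ?_⟩
  · refine subset_trans ?_ hball
    intro x hx
    have h1 : dist x z ≤ min (r'/2) (ε/2) := mem_closedBall.mp hx
    have h2 : min (r'/2) (ε/2) ≤ r'/2 := min_le_left _ _
    exact mem_ball.mpr (by linarith)
  · have : min (r'/2) (ε/2) ≤ ε/2 := min_le_right _ _
    linarith

lemma dist_in_closedBall {z : X} {r : ℝ} {ε : ℝ} (h : 2*r ≤ ε)
    {x y : X} (hx : x ∈ closedBall z r) (hy : y ∈ closedBall z r) : dist x y ≤ ε := by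
  have hx' := mem_closedBall.mp hx
  have hy' := mem_closedBall.mp hy
  calc dist x y ≤ dist x z + dist z y := dist_triangle _ _ _
    _ ≤ r + r := add_le_add hx' (by rwa [dist_comm] at hy')
    _ ≤ ε := by linarith

lemma two_balls (hX : ∀ x : X, Filter.NeBot (nhdsWithin x {x}ᶜ))
    {W : Set X} (hW : IsOpen W) (hWne : W.Nonempty) {ε : ℝ} (hε : 0 < ε) :
    ∃ c : Bool → Set X, (∀ b, IsOpen (c b) ∧ (c b).Nonempty ∧ closure (c b) ⊆ W ∧
      ∀ x ∈ closure (c b), ∀ y ∈ closure (c b), dist x y ≤ ε) ∧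
      Disjoint (closure (c false)) (closure (c true)) := by
  obtain ⟨a, ha⟩ := hWne
  obtain ⟨b, hbW, hba⟩ := exists_ne_mem hX hW ha a
  have hd : 0 < dist a b := dist_pos.mpr (Ne.symm hba)
  obtain ⟨ra, hra, hraW, hraε⟩ := small_ball hW ha (lt_min hε (by linarith : (0:ℝ) < dist a b / 2))
  obtain ⟨rb, hrb, hrbW, hrbε⟩ := small_ball hW hbW (lt_min hε (by linarith : (0:ℝ) < dist a b / 2))
  have hra' : 2 * ra ≤ ε := le_trans hraε (min_le_left _ _)
  have hrb' : 2 * rb ≤ ε := le_trans hrbε (min_le_left _ _)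
  have hra2 : 2 * ra ≤ dist a b / 2 := le_trans hraε (min_le_right _ _)
  have hrb2 : 2 * rb ≤ dist a b / 2 := le_trans hrbε (min_le_right _ _)
  refine ⟨fun bb => if bb then ball b rb else ball a ra, ?_, ?_⟩
  · intro bb
    cases bb <;> simp only [if_true, if_false, Bool.false_eq_true] <;>
    · constructor
      · exact isOpen_ball
      refine ⟨⟨_, mem_ball_self (by assumption)⟩, ?_, ?_⟩
      · exact subset_trans closure_ball_subset_closedBall (by assumption)
      · intro x hx y hy
        exact dist_in_closedBall (by assumption) (closure_ball_subset_closedBall hx)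
          (closure_ball_subset_closedBall hy)
  · simp only [if_true, if_false, Bool.false_eq_true]
    refine Set.disjoint_of_subset closure_ball_subset_closedBall
      closure_ball_subset_closedBall (closedBall_disjoint_closedBall ?_)
    linarith

lemma basis_lemma [TopologicalSpace.SeparableSpace X] [Nonempty X] :
    ∃ u : ℕ → Set X, (∀ m, IsOpen (u m) ∧ (u m).Nonempty) ∧
      ∀ U : Set X, IsOpen U → U.Nonempty → ∃ m, u m ⊆ U := by
  set d := TopologicalSpace.denseSeq X with hd
  refine ⟨fun m => ball (d (Nat.unpair m).1) ((1/2:ℝ)^(Nat.unpair m).2), ?_, ?_⟩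
  · intro m
    exact ⟨isOpen_ball, ⟨_, mem_ball_self (by positivity)⟩⟩
  · intro U hU ⟨x, hx⟩
    obtain ⟨ε, hε, hball⟩ := Metric.isOpen_iff.mp hU x hx
    obtain ⟨j, hj⟩ := exists_pow_lt_of_lt_one (by linarith : (0:ℝ) < ε/2) (by norm_num : (1/2:ℝ) < 1)
    obtain ⟨i, hi⟩ := Metric.denseRange_iff.mp (TopologicalSpace.denseRange_denseSeq X) x
      ((1/2:ℝ)^(j+1)) (by positivity)
    refine ⟨Nat.pair i (j+1), ?_⟩
    simp only [Nat.unpair_pair]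
    intro y hy
    apply hball
    have h1 : dist y (d i) < (1/2:ℝ)^(j+1) := mem_ball.mp hy
    have h2 : ((1/2:ℝ))^(j+1) = (1/2)^j/2 := by ring
    have h3 : dist x (d i) < (1/2:ℝ)^(j+1) := hi
    refine mem_ball.mpr ?_
    calc dist y x ≤ dist y (d i) + dist (d i) x := dist_triangle _ _ _
      _ < (1/2:ℝ)^(j+1) + (1/2:ℝ)^(j+1) := by rw [dist_comm (d i) x]; linarith
      _ = (1/2:ℝ)^j := by ring
      _ < ε := by linarith

section shrink
variable {ι : Type*}

lemma shrink_one (g : ι → Set X) (hg : ∀ i, IsOpen (g i) ∧ (g i).Nonempty)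
    {n : ℕ} (t : Fin n → ι) (ht : Function.Injective t)
    {E : Set (Fin n → X)} (hEo : IsOpen E) (hEd : Dense E) :
    ∃ g' : ι → Set X, (∀ i, g' i ⊆ g i ∧ IsOpen (g' i) ∧ (g' i).Nonempty) ∧
      ∀ x : Fin n → X, (∀ i, x i ∈ g' (t i)) → x ∈ E := by
  classical
  set box : Set (Fin n → X) := Set.pi Set.univ (fun i => g (t i)) with hbox
  have hboxo : IsOpen box := isOpen_set_pi Set.finite_univ (fun i _ => (hg (t i)).1)
  have hboxne : box.Nonempty := ⟨fun i => ((hg (t i)).2).some, fun i _ => ((hg (t i)).2).some_mem⟩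
  obtain ⟨z, hzbox, hzE⟩ := hEd.inter_open_nonempty box hboxo hboxne
  have hopen : IsOpen (E ∩ box) := hEo.inter hboxo
  obtain ⟨I, u, hu, hsub⟩ := isOpen_pi_iff.mp hopen z ⟨hzE, hzbox⟩
  set w : Fin n → Set X := fun i => if i ∈ I then u i ∩ g (t i) else g (t i) with hw
  have hwsub : ∀ i, w i ⊆ g (t i) := by
    intro i; by_cases h : i ∈ I <;> simp [hw, h]
  have hwo : ∀ i, IsOpen (w i) := by
    intro i; by_cases h : i ∈ I
    · simp only [hw, if_pos h]; exact ((hu i h).1).inter (hg (t i)).1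
    · simp only [hw, if_neg h]; exact (hg (t i)).1
  have hwne : ∀ i, (w i).Nonempty := by
    intro i; by_cases h : i ∈ I
    · exact ⟨z i, by simp only [hw, if_pos h]; exact ⟨(hu i h).2, hzbox i (Set.mem_univ i)⟩⟩
    · exact ⟨z i, by simp only [hw, if_neg h]; exact hzbox i (Set.mem_univ i)⟩
  refine ⟨fun iv => if h : ∃ i, t i = iv then w h.choose else g iv, ?_, ?_⟩
  · intro iv
    by_cases h : ∃ i, t i = iv
    · simp only [dif_pos h]
      exact ⟨(hwsub h.choose).trans (by rw [h.choose_spec]), hwo _, hwne _⟩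
    · simp only [dif_neg h]
      exact ⟨Set.Subset.rfl, (hg iv).1, (hg iv).2⟩
  · intro x hx
    have hxw : ∀ i, x i ∈ w i := by
      intro i
      have h : ∃ i', t i' = t i := ⟨i, rfl⟩
      have := hx i
      simp only [dif_pos h] at this
      have heq : h.choose = i := ht h.choose_spec
      rwa [heq] at this
    have : x ∈ (I : Set (Fin n)).pi u := by
      intro i hi
      have := hxw i
      have hi' : i ∈ I := hi
      simp only [hw, hi', if_true] at this
      exact this.1
    exact (hsub this).1


lemma shrink_tuples [Finite ι] {n : ℕ} {E : Set (Fin n → X)} (hEo : IsOpen E) (hEd : Dense E)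
    (T : Set (Fin n → ι)) (hT : T.Finite) :
    ∀ g : ι → Set X, (∀ i, IsOpen (g i) ∧ (g i).Nonempty) →
    ∃ g' : ι → Set X, (∀ i, g' i ⊆ g i ∧ IsOpen (g' i) ∧ (g' i).Nonempty) ∧
      ∀ t ∈ T, Function.Injective t → ∀ x : Fin n → X, (∀ i, x i ∈ g' (t i)) → x ∈ E := by
  classical
  refine Set.Finite.induction_on T hT ?_ ?_
  · intro g hg
    exact ⟨g, fun i => ⟨Set.Subset.rfl, (hg i).1, (hg i).2⟩, fun t ht => absurd ht (Set.notMem_empty t)⟩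
  · intro t T' _ _ IH g hg
    obtain ⟨g₁, hg₁, hT'⟩ := IH g hg
    by_cases hinj : Function.Injective t
    · obtain ⟨g₂, hg₂, ht⟩ := shrink_one g₁ (fun i => ⟨(hg₁ i).2.1, (hg₁ i).2.2⟩) t hinj hEo hEd
      refine ⟨g₂, fun i => ⟨(hg₂ i).1.trans (hg₁ i).1, (hg₂ i).2.1, (hg₂ i).2.2⟩, ?_⟩
      intro t' ht' hinj' x hx
      rcases Set.mem_insert_iff.mp ht' with rfl | hmem
      · exact ht x hx
      · exact hT' t' hmem hinj' x (fun i => (hg₂ (t' i)).1 (hx i))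
    · refine ⟨g₁, hg₁, ?_⟩
      intro t' ht' hinj' x hx
      rcases Set.mem_insert_iff.mp ht' with rfl | hmem
      · exact absurd hinj' hinj
      · exact hT' t' hmem hinj' x hx


lemma shrink_codes [Finite ι] (D : (n : ℕ) → ℕ → Set (Fin n → X))
    (hD : ∀ n j, IsOpen (D n j) ∧ Dense (D n j)) (c : ℕ) :
    ∀ g : ι → Set X, (∀ i, IsOpen (g i) ∧ (g i).Nonempty) →
    ∃ g' : ι → Set X, (∀ i, g' i ⊆ g i ∧ IsOpen (g' i) ∧ (g' i).Nonempty) ∧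
      ∀ n j, Nat.pair n j < c → ∀ t : Fin n → ι, Function.Injective t →
        ∀ x : Fin n → X, (∀ i, x i ∈ g' (t i)) → x ∈ D n j := by
  induction c with
  | zero =>
    intro g hg
    exact ⟨g, fun i => ⟨Set.Subset.rfl, (hg i).1, (hg i).2⟩, fun n j h => absurd h (by omega)⟩
  | succ c IH =>
    intro g hg
    obtain ⟨g₁, hg₁, hcodes⟩ := IH g hg
    obtain ⟨g₂, hg₂, htup⟩ := shrink_tuples (X := X) (ι := ι)
      (hD (Nat.unpair c).1 (Nat.unpair c).2).1 (hD (Nat.unpair c).1 (Nat.unpair c).2).2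
      Set.univ (Set.finite_univ) g₁ (fun i => ⟨(hg₁ i).2.1, (hg₁ i).2.2⟩)
    refine ⟨g₂, fun i => ⟨(hg₂ i).1.trans (hg₁ i).1, (hg₂ i).2.1, (hg₂ i).2.2⟩, ?_⟩
    intro n j hlt t hinj x hx
    rcases Nat.lt_succ_iff_lt_or_eq.mp hlt with h | h
    · exact hcodes n j h t hinj x (fun i => (hg₂ (t i)).1 (hx i))
    · have : (n, j) = Nat.unpair c := by rw [← h, Nat.unpair_pair]
      obtain ⟨hn, hj⟩ := Prod.mk.injEq .. ▸ this
      subst hn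
      rw [hj]
      exact htup t (Set.mem_univ t) hinj x hx

end shrink

lemma stepA (hX : ∀ x : X, Filter.NeBot (nhdsWithin x {x}ᶜ))
    (k : ℕ) (f : ℕ × List Bool → Set X) {U : Set X}
    (hf : Pgeom k f) (hU : IsOpen U) (hUne : U.Nonempty) :
    ∃ g, Pgeom (k+1) g ∧ Link f g U k := by
  classical
  have hhalf : (0:ℝ) < (1/2)^(k+1) := by positivity
  have claim : ∃ (root Rt : Set X), IsOpen root ∧ root.Nonempty ∧ closure root ⊆ Rt ∧
      Rt ⊆ U ∧ (∀ x ∈ Rt, ∀ y ∈ Rt, dist x y ≤ (1/2:ℝ)^(k+1)) ∧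
      ∀ p, ∃ Wp : Set X, Idx k p →
        (IsOpen Wp ∧ Wp.Nonempty ∧ Wp ⊆ f p ∧ Disjoint Wp Rt) := by
    by_cases hcov : ∃ p, Idx k p ∧ (U ∩ f p).Nonempty
    · obtain ⟨p₀, hp₀, z, hzU, hzf⟩ := hcov
      have hfo := (hf.1 p₀ hp₀).2.1
      have hop : IsOpen (U ∩ f p₀) := hU.inter hfo
      obtain ⟨a, haf, haz⟩ := exists_ne_mem hX hfo hzf z
      have hdz : 0 < dist z a := dist_pos.mpr (Ne.symm haz)
      obtain ⟨ρ, hρ, hρsub, hρε⟩ := small_ball hop ⟨hzU, hzf⟩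
        (lt_min hhalf hdz)
      have hρ1 : 2*ρ ≤ (1/2:ℝ)^(k+1) := le_trans hρε (min_le_left _ _)
      have hρ2 : 2*ρ ≤ dist z a := le_trans hρε (min_le_right _ _)
      refine ⟨ball z ρ, closedBall z ρ, isOpen_ball, ⟨z, mem_ball_self hρ⟩,
        closure_ball_subset_closedBall, hρsub.trans Set.inter_subset_left, ?_, ?_⟩
      · intro x hx y hy; exact dist_in_closedBall hρ1 hx hy
      · intro p
        by_cases hp : Idx k p
        · by_cases hpe : p = p₀
          · subst hpe
            refine ⟨f p \ closedBall z ρ, fun _ => ⟨(hf.1 p hp).2.1.sdiff Metric.isClosed_closedBall,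
              ⟨a, haf, ?_⟩, Set.diff_subset, Set.disjoint_sdiff_left⟩⟩
            intro hmem
            have h1 : dist a z ≤ ρ := mem_closedBall.mp hmem
            rw [dist_comm] at h1
            linarith
          · refine ⟨f p, fun _ => ⟨(hf.1 p hp).2.1, (hf.1 p hp).1, Set.Subset.rfl, ?_⟩⟩
            have hdisj := hf.2 p p₀ hp hp₀ hpe
            exact Set.disjoint_of_subset subset_closure
              (hρsub.trans (Set.inter_subset_right.trans subset_closure)) hdisj
        · exact ⟨∅, fun h => absurd h hp⟩
    · push_neg at hcov
      obtain ⟨z, hzU⟩ := hUne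
      obtain ⟨ρ, hρ, hρsub, hρε⟩ := small_ball hU hzU hhalf
      refine ⟨ball z ρ, closedBall z ρ, isOpen_ball, ⟨z, mem_ball_self hρ⟩,
        closure_ball_subset_closedBall, hρsub, ?_, ?_⟩
      · intro x hx y hy; exact dist_in_closedBall hρε hx hy
      · intro p
        by_cases hp : Idx k p
        · refine ⟨f p, fun _ => ⟨(hf.1 p hp).2.1, (hf.1 p hp).1, Set.Subset.rfl, ?_⟩⟩
          have h0 : U ∩ f p = ∅ := hcov p hp
          refine Set.disjoint_left.mpr (fun x hxf hxR => ?_)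
          have : x ∈ U ∩ f p := ⟨hρsub hxR, hxf⟩
          rw [h0] at this
          exact this
        · exact ⟨∅, fun h => absurd h hp⟩
  obtain ⟨root, Rt, hro, hrne, hrcl, hRU, hRdiam, hnodes⟩ := claim
  choose W hW using hnodes
  have hch : ∀ p, ∃ c : Bool → Set X, Idx k p →
      ((∀ b, IsOpen (c b) ∧ (c b).Nonempty ∧ closure (c b) ⊆ W p ∧
        ∀ x ∈ closure (c b), ∀ y ∈ closure (c b), dist x y ≤ (1/2:ℝ)^(k+1)) ∧
      Disjoint (closure (c false)) (closure (c true))) := by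
    intro p
    by_cases hp : Idx k p
    · obtain ⟨c, hc1, hc2⟩ := two_balls hX (hW p hp).1 (hW p hp).2.1 hhalf
      exact ⟨c, fun _ => ⟨hc1, hc2⟩⟩
    · exact ⟨fun _ => ∅, fun h => absurd h hp⟩
  choose ch hch' using hch
  set g : ℕ × List Bool → Set X := fun p =>
    if p = (k, ([] : List Bool)) then root
    else ch (p.1, p.2.dropLast) ((p.2.getLast?).getD true) with hgdef
  have gval_root : g (k, ([] : List Bool)) = root := by simp [hgdef]
  have gval_child : ∀ m (s : List Bool) b, g (m, s ++ [b]) = ch (m, s) b := by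
    intro m s b
    have hne : (m, s ++ [b]) ≠ (k, ([] : List Bool)) := by simp
    simp [hgdef, hne, List.dropLast_concat, List.getLast?_concat]
  have hdecomp : ∀ p : ℕ × List Bool, Idx (k+1) p →
      p = (k, ([] : List Bool)) ∨ ∃ m s b, p = (m, s ++ [b]) ∧ Idx k (m, s) := by
    rintro ⟨m, s⟩ hp
    have hp' : m + s.length + 1 = k + 1 := hp
    rcases List.eq_nil_or_concat' s with rfl | ⟨s', b, rfl⟩
    · left
      simp only [List.length_nil] at hp'
      have : m = k := by omega
      subst this; rfl
    · right
      refine ⟨m, s', b, rfl, ?_⟩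
      show m + s'.length + 1 = k
      simp only [List.length_append, List.length_cons, List.length_nil] at hp'
      omega
  -- child facts
  have childfacts : ∀ m (s : List Bool) b, Idx k (m, s) →
      IsOpen (ch (m, s) b) ∧ (ch (m, s) b).Nonempty ∧ closure (ch (m, s) b) ⊆ W (m, s) ∧
        ∀ x ∈ closure (ch (m, s) b), ∀ y ∈ closure (ch (m, s) b), dist x y ≤ (1/2:ℝ)^(k+1) :=
    fun m s b h => (hch' (m, s) h).1 b
  refine ⟨g, ⟨?_, ?_⟩, ?_, ?_⟩
  · -- openness/nonempty/diam
    intro p hp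
    rcases hdecomp p hp with rfl | ⟨m, s, b, rfl, hidx⟩
    · rw [gval_root]
      refine ⟨hrne, hro, ?_⟩
      intro x hx y hy
      exact hRdiam x (hrcl hx) y (hrcl hy)
    · rw [gval_child]
      obtain ⟨h1, h2, h3, h4⟩ := childfacts m s b hidx
      exact ⟨h2, h1, h4⟩
  · -- pairwise disjoint
    intro p q hp hq hne
    rcases hdecomp p hp with rfl | ⟨m, s, b, rfl, hidx⟩ <;>
      rcases hdecomp q hq with rfl | ⟨m', s', b', rfl, hidx'⟩
    · exact absurd rfl hne
    · rw [gval_root, gval_child]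
      have hcsub := (childfacts m' s' b' hidx').2.2.1
      exact Set.disjoint_of_subset hrcl hcsub ((hW (m', s') hidx').2.2.2.symm)
    · rw [gval_root, gval_child]
      have hcsub := (childfacts m s b hidx).2.2.1
      exact Set.disjoint_of_subset hcsub hrcl ((hW (m, s) hidx).2.2.2)
    · rw [gval_child, gval_child]
      by_cases hpp : (m, s) = (m', s')
      · -- same parent, different b
        injection hpp with h1 h2
        subst h1; subst h2
        have hbb : b ≠ b' := by rintro rfl; exact hne rfl
        have := (hch' (m, s) hidx).2
        cases b <;> cases b'
        · exact absurd rfl hbb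
        · exact this
        · exact this.symm
        · exact absurd rfl hbb
      · have hdisj := hf.2 (m, s) (m', s') hidx hidx' hpp
        exact Set.disjoint_of_subset
          ((childfacts m s b hidx).2.2.1.trans ((hW (m, s) hidx).2.2.1.trans subset_closure))
          ((childfacts m' s' b' hidx').2.2.1.trans ((hW (m', s') hidx').2.2.1.trans subset_closure))
          hdisj
  · intro m s b hidx
    rw [gval_child]
    exact ((childfacts m s b hidx).2.2.1).trans (hW (m, s) hidx).2.2.1
  · rw [gval_root]
    exact hrcl.trans hRU

lemma stepB (D : (n : ℕ) → ℕ → Set (Fin n → X))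
    (hD : ∀ n j, IsOpen (D n j) ∧ Dense (D n j))
    (k : ℕ) {f g : ℕ × List Bool → Set X} {U : Set X}
    (hg : Pgeom (k+1) g) (hlink : Link f g U k) :
    ∃ g', Pgeom (k+1) g' ∧ Link f g' U k ∧ Qd D (k+1) g' := by
  classical
  haveI : Finite {p : ℕ × List Bool // Idx (k+1) p} := (idx_finite (k+1)).to_subtype
  obtain ⟨G', hG', hQ⟩ := shrink_codes D hD (k+1)
    (fun i : {p : ℕ × List Bool // Idx (k+1) p} => g i.1)
    (fun i => ⟨(hg.1 i.1 i.2).2.1, (hg.1 i.1 i.2).1⟩)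
  set g' : ℕ × List Bool → Set X :=
    fun p => if h : Idx (k+1) p then G' ⟨p, h⟩ else g p with hg'def
  have hsub : ∀ p, g' p ⊆ g p := by
    intro p
    by_cases h : Idx (k+1) p
    · simp only [hg'def, dif_pos h]; exact (hG' ⟨p, h⟩).1
    · simp only [hg'def, dif_neg h]; exact Set.Subset.rfl
  refine ⟨g', ⟨?_, ?_⟩, ⟨?_, ?_⟩, ?_⟩
  · intro p hp
    simp only [hg'def, dif_pos hp]
    refine ⟨(hG' ⟨p, hp⟩).2.2, (hG' ⟨p, hp⟩).2.1, ?_⟩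
    intro x hx y hy
    have hc : closure (G' ⟨p, hp⟩) ⊆ closure (g p) := closure_mono (hG' ⟨p, hp⟩).1
    exact (hg.1 p hp).2.2 x (hc hx) y (hc hy)
  · intro p q hp hq hne
    exact Set.disjoint_of_subset (closure_mono (hsub p)) (closure_mono (hsub q))
      (hg.2 p q hp hq hne)
  · intro m s b hidx
    exact (closure_mono (hsub (m, s ++ [b]))).trans (hlink.1 m s b hidx)
  · exact (closure_mono (hsub (k, []))).trans hlink.2
  · intro n j hlt t hidx hinj x hx
    refine hQ n j hlt (fun i => ⟨t i, hidx i⟩)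
      (fun a b h => hinj (congrArg Subtype.val h)) x ?_
    intro i
    have := hx i
    simpa only [hg'def, dif_pos (hidx i)] using this

lemma step_total (hX : ∀ x : X, Filter.NeBot (nhdsWithin x {x}ᶜ))
    (D : (n : ℕ) → ℕ → Set (Fin n → X))
    (hD : ∀ n j, IsOpen (D n j) ∧ Dense (D n j))
    (k : ℕ) (f : ℕ × List Bool → Set X) (U : Set X) :
    ∃ g, (Pgeom k f → IsOpen U → U.Nonempty →
      Pgeom (k+1) g ∧ Link f g U k ∧ Qd D (k+1) g) := by
  by_cases h : Pgeom k f ∧ IsOpen U ∧ U.Nonempty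
  · obtain ⟨g0, hg0, hl0⟩ := stepA hX k f h.1 h.2.1 h.2.2
    obtain ⟨g, hg, hl, hq⟩ := stepB D hD k hg0 hl0
    exact ⟨g, fun _ _ _ => ⟨hg, hl, hq⟩⟩
  · exact ⟨f, fun h1 h2 h3 => absurd ⟨h1, h2, h3⟩ h⟩

lemma main_construction [CompleteSpace X] [TopologicalSpace.SeparableSpace X] [Nonempty X]
    (hX : ∀ x : X, Filter.NeBot (nhdsWithin x {x}ᶜ))
    (D : (n : ℕ) → ℕ → Set (Fin n → X))
    (hD : ∀ n j, IsOpen (D n j) ∧ Dense (D n j)) :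
    ∃ K : Set X,
      (∀ U : Set X, IsOpen U → U.Nonempty →
        ∃ C : Set X, C ⊆ K ∩ U ∧ C.Nonempty ∧ Perfect C ∧ IsCompact C) ∧
      ∀ (n : ℕ) (x : Fin n → X), (∀ i, x i ∈ K) → Function.Injective x →
        x ∈ ⋂ j, D n j := by
  classical
  obtain ⟨u, hu, hbasis⟩ := basis_lemma (X := X)
  have ex_step : ∀ (k : ℕ) (f : ℕ × List Bool → Set X), ∃ g,
      (Pgeom k f → Pgeom (k+1) g ∧ Link f g (u k) k ∧ Qd D (k+1) g) := by
    intro k f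
    obtain ⟨g, hg⟩ := step_total hX D hD k f (u k)
    exact ⟨g, fun hf => hg hf (hu k).1 (hu k).2⟩
  choose step hstep using ex_step
  let F : ℕ → (ℕ × List Bool → Set X) := fun k =>
    Nat.rec (motive := fun _ => ℕ × List Bool → Set X) (fun _ => (∅ : Set X))
      (fun k fk => step k fk) k
  have hFs : ∀ k, F (k+1) = step k (F k) := fun k => rfl
  have hP : ∀ k, Pgeom k (F k) := by
    intro k
    induction k with
    | zero =>
      constructor
      · intro p hp
        exact absurd (hp : p.1 + p.2.length + 1 = 0) (Nat.succ_ne_zero _)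
      · intro p q hp _ _
        exact absurd (hp : p.1 + p.2.length + 1 = 0) (Nat.succ_ne_zero _)
    | succ k IH => exact (hstep k (F k) IH).1
  have hL : ∀ k, Link (F k) (F (k+1)) (u k) k := fun k => (hstep k (F k) (hP k)).2.1
  have hQall : ∀ k, Qd D k (F k) := by
    intro k
    cases k with
    | zero => intro n j h; exact absurd h (by omega)
    | succ k => exact (hstep k (F k) (hP k)).2.2
  -- branch approximations
  set sl : (ℕ → Bool) → ℕ → List Bool := fun σ l => (List.range l).map σ with hsldef
  have hsl_len : ∀ σ l, (sl σ l).length = l := by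
    intro σ l; simp [hsldef]
  have hsl_succ : ∀ σ l, sl σ (l+1) = sl σ l ++ [σ l] := by
    intro σ l; simp [hsldef, List.range_succ]
  have hIdxsl : ∀ m (σ : ℕ → Bool) l, Idx (m+l+1) (m, sl σ l) := by
    intro m σ l
    show m + (sl σ l).length + 1 = m + l + 1
    rw [hsl_len]
  set NN : ℕ → (ℕ → Bool) → ℕ → Set X := fun m σ l => F (m+l+1) (m, sl σ l) with hNNdef
  have hNN : ∀ m σ l, (NN m σ l).Nonempty ∧ IsOpen (NN m σ l) ∧
      ∀ x ∈ closure (NN m σ l), ∀ y ∈ closure (NN m σ l), dist x y ≤ (1/2:ℝ)^(m+l+1) :=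
    fun m σ l => (hP (m+l+1)).1 (m, sl σ l) (hIdxsl m σ l)
  have nest : ∀ m (σ : ℕ → Bool) l, closure (NN m σ (l+1)) ⊆ NN m σ l := by
    intro m σ l
    have h := (hL (m+l+1)).1 m (sl σ l) (σ l) (hIdxsl m σ l)
    rw [← hsl_succ] at h
    exact h
  have mono : ∀ m (σ : ℕ → Bool) l l', l ≤ l' → NN m σ l' ⊆ NN m σ l := by
    intro m σ l l' h
    induction l', h using Nat.le_induction with
    | base => exact Set.Subset.rfl
    | succ l' hll IH => exact (subset_closure.trans (nest m σ l')).trans IH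
  have hpow : ∀ a b : ℕ, a ≤ b → ((1:ℝ)/2)^b ≤ (1/2)^a := by
    intro a b h
    exact pow_le_pow_of_le_one (by norm_num) (by norm_num) h
  have hdiam : ∀ m (σ : ℕ → Bool) l, ∀ x ∈ closure (NN m σ l), ∀ y ∈ closure (NN m σ l),
      dist x y ≤ (1/2:ℝ)^l := by
    intro m σ l x hx y hy
    exact le_trans ((hNN m σ l).2.2 x hx y hy) (hpow l (m+l+1) (by omega))
  choose y hy using fun m σ l => (hNN m σ l).1
  have hcauchy : ∀ m σ, CauchySeq (y m σ) := by
    intro m σ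
    refine Metric.cauchySeq_iff'.mpr (fun ε hε => ?_)
    obtain ⟨N, hN⟩ := exists_pow_lt_of_lt_one hε (by norm_num : (1:ℝ)/2 < 1)
    refine ⟨N, fun n hn => ?_⟩
    have h1 : y m σ n ∈ closure (NN m σ N) := subset_closure (mono m σ N n hn (hy m σ n))
    have h2 : y m σ N ∈ closure (NN m σ N) := subset_closure (hy m σ N)
    exact lt_of_le_of_lt (hdiam m σ N _ h1 _ h2) hN
  choose pt hpt using fun m σ => cauchySeq_tendsto_of_complete (hcauchy m σ)
  have hptmem : ∀ m σ l, pt m σ ∈ closure (NN m σ l) := by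
    intro m σ l
    refine isClosed_closure.mem_of_tendsto (hpt m σ) ?_
    filter_upwards [eventually_ge_atTop l] with j hj
    exact subset_closure (mono m σ l j hj (hy m σ j))
  have hagree : ∀ (σ τ : ℕ → Bool) l, (∀ i, i < l → σ i = τ i) → sl σ l = sl τ l := by
    intro σ τ l h
    simp only [hsldef]
    exact List.map_congr_left (fun a ha => h a (List.mem_range.mp ha))
  have hdistpt : ∀ m (σ τ : ℕ → Bool) l, (∀ i, i < l → σ i = τ i) →
      dist (pt m σ) (pt m τ) ≤ (1/2:ℝ)^l := by
    intro m σ τ l h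
    have h1 := hptmem m σ l
    have h2 := hptmem m τ l
    have heq : NN m τ l = NN m σ l := by
      simp only [hNNdef]
      rw [hagree σ τ l h]
    rw [heq] at h2
    exact hdiam m σ l _ h1 _ h2
  have hinjpt : ∀ m (σ τ : ℕ → Bool), σ ≠ τ → pt m σ ≠ pt m τ := by
    intro m σ τ hne heq
    have hex : ∃ l, σ l ≠ τ l := Function.ne_iff.mp hne
    have hspec : σ (Nat.find hex) ≠ τ (Nat.find hex) := Nat.find_spec hex
    set l := Nat.find hex with hldef
    have hmin : ∀ i, i < l → σ i = τ i := fun i hi => not_not.mp (Nat.find_min hex hi)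
    have hsleq : sl σ l = sl τ l := hagree σ τ l hmin
    have h1 : pt m σ ∈ closure (F (m+l+1+1) (m, sl σ l ++ [σ l])) := by
      have h := hptmem m σ (l+1)
      simp only [hNNdef] at h
      rw [hsl_succ] at h
      exact h
    have h2 : pt m τ ∈ closure (F (m+l+1+1) (m, sl σ l ++ [τ l])) := by
      have h := hptmem m τ (l+1)
      simp only [hNNdef] at h
      rw [hsl_succ, ← hsleq] at h
      exact h
    have hpq : (m, sl σ l ++ [σ l]) ≠ (m, sl σ l ++ [τ l]) := by
      intro h
      apply hspec
      have h' := (Prod.ext_iff.mp h).2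
      simpa using h'
    have hIdx1 : Idx (m+l+1+1) (m, sl σ l ++ [σ l]) := by
      rw [← hsl_succ]
      exact hIdxsl m σ (l+1)
    have hIdx2 : Idx (m+l+1+1) (m, sl σ l ++ [τ l]) := by
      rw [hsleq, ← hsl_succ]
      exact hIdxsl m τ (l+1)
    have hdisj := (hP (m+l+1+1)).2 _ _ hIdx1 hIdx2 hpq
    rw [heq] at h1
    exact Set.disjoint_left.mp hdisj h1 h2
  refine ⟨{x : X | ∃ m σ, pt m σ = x}, ?_, ?_⟩
  · -- Mycielski property
    intro U hUo hUne
    obtain ⟨m, hm⟩ := hbasis U hUo hUne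
    have hcont : Continuous (pt m) := by
      refine continuous_iff_continuousAt.mpr (fun σ => ?_)
      refine Metric.tendsto_nhds.mpr (fun ε hε => ?_)
      obtain ⟨l, hl⟩ := exists_pow_lt_of_lt_one hε (by norm_num : (1:ℝ)/2 < 1)
      have hopen : IsOpen ((↑(Finset.range l) : Set ℕ).pi (fun i => ({σ i} : Set Bool))) :=
        isOpen_set_pi (Finset.range l).finite_toSet (fun a _ => isOpen_discrete _)
      have hmem : σ ∈ (↑(Finset.range l) : Set ℕ).pi (fun i => ({σ i} : Set Bool)) :=
        fun i _ => rfl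
      filter_upwards [hopen.mem_nhds hmem] with τ hτ
      have hag : ∀ i, i < l → τ i = σ i := by
        intro i hi
        have := hτ i (by simpa using hi)
        simpa using this
      exact lt_of_le_of_lt (hdistpt m τ σ l hag) hl
    have hcompact : IsCompact (Set.range (pt m)) := isCompact_range hcont
    refine ⟨Set.range (pt m), ?_, ⟨pt m (fun _ => false), Set.mem_range_self _⟩,
      ⟨hcompact.isClosed, ?_⟩, hcompact⟩
    · rintro _ ⟨σ, rfl⟩
      refine ⟨⟨m, σ, rfl⟩, hm ?_⟩
      have h0 := hptmem m σ 0
      have he : NN m σ 0 = F (m+1) (m, []) := by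
        simp [hNNdef, hsldef]
      rw [he] at h0
      exact (hL m).2 h0
    · -- Preperfect
      intro x hx
      obtain ⟨σ, rfl⟩ := hx
      rw [accPt_iff_nhds]
      intro V hV
      obtain ⟨ε, hε, hball⟩ := Metric.mem_nhds_iff.mp hV
      obtain ⟨l, hl⟩ := exists_pow_lt_of_lt_one hε (by norm_num : (1:ℝ)/2 < 1)
      set τ := Function.update σ l (!σ l) with hτdef
      have hτσ : τ ≠ σ := by
        intro h
        have := congrFun h l
        simp [hτdef, Function.update_self] at this
      refine ⟨pt m τ, ⟨⟨hball ?_, ⟨τ, rfl⟩⟩, hinjpt m τ σ hτσ⟩⟩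
      have hag : ∀ i, i < l → τ i = σ i := by
        intro i hi
        simp [hτdef, Function.update_of_ne (by omega : i ≠ l)]
      exact mem_ball.mpr (lt_of_le_of_lt (hdistpt m τ σ l hag) hl)
  · -- distinct tuples
    intro n x hxK hxinj
    refine Set.mem_iInter.mpr (fun j => ?_)
    choose ms σs hms using hxK
    have hexN : ∀ (i i' : Fin n), i ≠ i' → ∃ N, ((1:ℝ)/2)^N < dist (x i) (x i') := by
      intro i i' h
      exact exists_pow_lt_of_lt_one (dist_pos.mpr (fun he => h (hxinj he)))
        (by norm_num : (1:ℝ)/2 < 1)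
    set Nf : Fin n → Fin n → ℕ := fun i i' => if h : i ≠ i' then (hexN i i' h).choose else 0
      with hNfdef
    set L := ((Finset.univ.sup (fun i : Fin n => ms i + 1)) ⊔ (Nat.pair n j + 1)) ⊔
      (Finset.univ.sup (fun q : Fin n × Fin n => Nf q.1 q.2 + 1)) with hLdef
    have hL1 : ∀ i, ms i + 1 ≤ L :=
      fun i => le_trans (Finset.le_sup (f := fun i : Fin n => ms i + 1) (Finset.mem_univ i))
        (le_sup_left.trans le_sup_left)
    have hL2 : Nat.pair n j < L := lt_of_lt_of_le (Nat.lt_succ_self _)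
      (le_sup_right.trans le_sup_left)
    have hL3 : ∀ i i', i ≠ i' → ((1:ℝ)/2)^L < dist (x i) (x i') := by
      intro i i' h
      have hNle : Nf i i' + 1 ≤ L :=
        le_trans (Finset.le_sup (f := fun q : Fin n × Fin n => Nf q.1 q.2 + 1)
          (Finset.mem_univ (i, i'))) le_sup_right
      have h1 : ((1:ℝ)/2)^L ≤ (1/2)^(Nf i i') := hpow _ _ (by omega)
      have h2 : ((1:ℝ)/2)^(Nf i i') < dist (x i) (x i') := by
        rw [hNfdef]
        simp only [dif_pos h]
        exact (hexN i i' h).choose_spec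
      linarith
    set q : Fin n → ℕ × List Bool := fun i => (ms i, sl (σs i) (L - ms i - 1)) with hqdef
    have hqIdx : ∀ i, Idx L (q i) := by
      intro i
      show ms i + (sl (σs i) (L - ms i - 1)).length + 1 = L
      rw [hsl_len]
      have := hL1 i
      omega
    have hxmem : ∀ i, x i ∈ F L (q i) := by
      intro i
      have hm1 := hL1 i
      have e1 : ms i + (L - ms i - 1) + 1 = L := by omega
      have h1 := hptmem (ms i) (σs i) (L - ms i - 1 + 1)
      have h3 := nest (ms i) (σs i) (L - ms i - 1) h1
      rw [hms i] at h3
      have h4 : NN (ms i) (σs i) (L - ms i - 1) = F L (q i) := by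
        simp only [hNNdef, hqdef]
        rw [e1]
      rw [h4] at h3
      exact h3
    have hqinj : Function.Injective q := by
      intro i i' he
      by_contra hne
      have hd := hL3 i i' hne
      have h1 := hxmem i
      have h2 := hxmem i'
      rw [he] at h1
      have hdd := ((hP L).1 (q i') (hqIdx i')).2.2 _ (subset_closure h1) _ (subset_closure h2)
      have hLL : ((1:ℝ)/2)^L ≥ (1/2:ℝ)^L := le_refl _
      have : dist (x i) (x i') ≤ ((1:ℝ)/2)^L := hdd
      linarith
    exact hQall L n j hL2 q hqIdx hqinj x hxmem

end Myc

/-- Mycielski's theorem: Let `X` be a separable complete metric space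
without isolated points, and for each `n` let `R n` be residual in `X^n`. Then there is
a Mycielski set `K` (its intersection with every nonempty open set contains a Cantor
set, i.e. a nonempty perfect compact set) such that every tuple of pairwise distinct
points of `K` lies in the corresponding `R n`. -/
theorem mycielski
    {X : Type*} [MetricSpace X] [CompleteSpace X] [TopologicalSpace.SeparableSpace X]
    (hX : ∀ x : X, Filter.NeBot (nhdsWithin x {x}ᶜ))
    (R : (n : ℕ) → Set (Fin n → X))
    (hR : ∀ n, R n ∈ residual (Fin n → X)) :
    ∃ K : Set X,
      (∀ U : Set X, IsOpen U → U.Nonempty →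
        ∃ C : Set X, C ⊆ K ∩ U ∧ C.Nonempty ∧ Perfect C ∧ IsCompact C) ∧
      ∀ (n : ℕ) (x : Fin n → X), (∀ i, x i ∈ K) → Function.Injective x → x ∈ R n := by
  classical
  -- decompose residual sets
  have hDex : ∀ n, ∃ Dn : ℕ → Set (Fin n → X),
      (∀ j, IsOpen (Dn j) ∧ Dense (Dn j)) ∧ (⋂ j, Dn j) ⊆ R n := by
    intro n
    obtain ⟨S, hSo, hSd, hSc, hSsub⟩ := mem_residual_iff.mp (hR n)
    have hS'c : (insert Set.univ S).Countable := hSc.insert _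
    obtain ⟨f, hf⟩ := hS'c.exists_eq_range ⟨Set.univ, Set.mem_insert _ _⟩
    refine ⟨f, ?_, ?_⟩
    · intro j
      have : f j ∈ insert Set.univ S := by rw [hf]; exact Set.mem_range_self _
      rcases Set.mem_insert_iff.mp this with h | h
      · rw [h]; exact ⟨isOpen_univ, dense_univ⟩
      · exact ⟨hSo _ h, hSd _ h⟩
    · refine Set.Subset.trans ?_ hSsub
      intro x hx
      intro s hs
      have : s ∈ insert Set.univ S := Set.mem_insert_iff.mpr (Or.inr hs)
      rw [hf] at this
      obtain ⟨j, rfl⟩ := this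
      exact Set.mem_iInter.mp hx j
  choose D hD hDsub using hDex
  by_cases hne : Nonempty X
  · obtain ⟨K, hK1, hK2⟩ := Myc.main_construction hX D hD
    exact ⟨K, hK1, fun n x hx hinj => hDsub n (hK2 n x hx hinj)⟩
  · -- X is empty
    refine ⟨∅, ?_, ?_⟩
    · intro U _ hU
      exact absurd ⟨hU.some⟩ hne
    · intro n x hx _
      cases n with
      | zero =>
        have hd : Dense (R 0) := dense_of_mem_residual (hR 0)
        have : Nonempty (Fin 0 → X) := ⟨x⟩
        obtain ⟨z, hz⟩ := hd.nonempty
        have : z = x := funext (fun i => absurd i.2 (by omega))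
        rwa [this] at hz
      | succ n =>
        exact absurd ⟨x 0⟩ hne
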